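/- (Corollary C.3, subclass feature annihilated by the min-norm solution matrix.) In the structured contrastive dataset with μ = 0, one has v_2ᵀ M† M⁺ M† v_2 = 0; equivalently, every real matrix W with WᵀW = M† M⁺ M† satisfies W v_2 = 0. -/

import Mathlib

open Matrix

/-- The contrastive trace loss `Tr(-2 WᵀW P + WᵀW M WᵀW M)`. -/
noncomputable def CLTraceLoss {p D : ℕ} (P M : Matrix (Fin D) (Fin D) ℝ)
    (W : Matrix (Fin p) (Fin D) ℝ) : ℝ :=
  Matrix.trace ((-2 : ℝ) • (Wᵀ * W * P) + Wᵀ * W * M * (Wᵀ * W) * M)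

/-- `Ad` is the Moore–Penrose pseudoinverse of `A`. -/
def IsPseudoinverse {N : ℕ} (A Ad : Matrix (Fin N) (Fin N) ℝ) : Prop :=
  A * Ad * A = A ∧ Ad * A * Ad = Ad ∧ (A * Ad)ᵀ = A * Ad ∧ (Ad * A)ᵀ = Ad * A

lemma mulVec_vecMulVec {D : ℕ} (a b c : Fin D → ℝ) :
    (Matrix.vecMulVec a b).mulVec c = (b ⬝ᵥ c) • a := by
  ext t
  simp only [Matrix.vecMulVec_apply, Matrix.mulVec, dotProduct, Pi.smul_apply,
    smul_eq_mul, Finset.sum_mul, Finset.mul_sum]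
  exact Finset.sum_congr rfl fun s _ => by ring

lemma mul_vecMulVec {D : ℕ} (A : Matrix (Fin D) (Fin D) ℝ) (a b : Fin D → ℝ) :
    A * Matrix.vecMulVec a b = Matrix.vecMulVec (A.mulVec a) b := by
  ext t j
  simp only [Matrix.vecMulVec_apply, Matrix.mul_apply, Matrix.mulVec, dotProduct,
    Finset.sum_mul]
  exact Finset.sum_congr rfl fun s _ => by ring

lemma vecMulVec_mul {D : ℕ} (a b : Fin D → ℝ) (A : Matrix (Fin D) (Fin D) ℝ) :
    Matrix.vecMulVec a b * A = Matrix.vecMulVec a (Aᵀ.mulVec b) := by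
  ext t j
  simp only [Matrix.vecMulVec_apply, Matrix.mul_apply, Matrix.mulVec, dotProduct,
    Matrix.transpose_apply, Finset.mul_sum]
  exact Finset.sum_congr rfl fun s _ => by ring

lemma vecMulVec_transpose' {D : ℕ} (a b : Fin D → ℝ) :
    (Matrix.vecMulVec a b)ᵀ = Matrix.vecMulVec b a := by
  ext t j; simp [Matrix.vecMulVec_apply, Matrix.transpose_apply, mul_comm]

lemma vecMulVec_mul_vecMulVec {D : ℕ} (a b c d : Fin D → ℝ) :
    Matrix.vecMulVec a b * Matrix.vecMulVec c d = (b ⬝ᵥ c) • Matrix.vecMulVec a d := by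
  ext t j
  simp only [Matrix.vecMulVec_apply, Matrix.mul_apply, Matrix.smul_apply, smul_eq_mul,
    dotProduct, Finset.sum_mul, Finset.mul_sum]
  exact Finset.sum_congr rfl fun s _ => by ring

lemma sum_mulVec' {D N : ℕ} (A : Fin N → Matrix (Fin D) (Fin D) ℝ) (w : Fin D → ℝ) :
    (∑ j, A j).mulVec w = ∑ j, (A j).mulVec w := by
  ext t
  simp [Matrix.mulVec, dotProduct, Matrix.sum_apply, Finset.sum_mul]
  rw [Finset.sum_comm]

lemma mulVec_sum' {D N : ℕ} (A : Matrix (Fin D) (Fin D) ℝ) (w : Fin N → Fin D → ℝ) :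
    A.mulVec (∑ j, w j) = ∑ j, A.mulVec (w j) := by
  ext t
  simp [Matrix.mulVec, dotProduct, Finset.sum_apply, Finset.mul_sum]
  rw [Finset.sum_comm]

lemma sum_mul_const_mul {D : ℕ} (w z : Fin D → ℝ) (c : ℝ) :
    ∑ t, w t * (c * z t) = c * ∑ t, w t * z t := by
  rw [Finset.mul_sum]
  exact Finset.sum_congr rfl fun t _ => by ring

lemma pinv_unique {N : ℕ} {A N1 N2 : Matrix (Fin N) (Fin N) ℝ}
    (h1 : IsPseudoinverse A N1) (h2 : IsPseudoinverse A N2) : N1 = N2 := by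
  obtain ⟨h1a, h1b, h1c, h1d⟩ := h1
  obtain ⟨h2a, h2b, h2c, h2d⟩ := h2
  have hAt : Aᵀ = Aᵀ * (N2ᵀ * Aᵀ) := by
    conv_lhs => rw [← h2a]
    simp only [Matrix.transpose_mul, Matrix.mul_assoc]
  have key1 : A * N1 = A * N2 := by
    calc A * N1 = N1ᵀ * Aᵀ := by rw [← Matrix.transpose_mul, h1c]
    _ = N1ᵀ * (Aᵀ * (N2ᵀ * Aᵀ)) := by rw [← hAt]
    _ = (N1ᵀ * Aᵀ) * (N2ᵀ * Aᵀ) := by rw [Matrix.mul_assoc]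
    _ = (A * N1)ᵀ * (A * N2)ᵀ := by rw [Matrix.transpose_mul, Matrix.transpose_mul]
    _ = (A * N1) * (A * N2) := by rw [h1c, h2c]
    _ = (A * N1 * A) * N2 := by simp only [Matrix.mul_assoc]
    _ = A * N2 := by rw [h1a]
  have key2 : N1 * A = N2 * A := by
    calc N1 * A = Aᵀ * N1ᵀ := by rw [← Matrix.transpose_mul, h1d]
    _ = (Aᵀ * (N2ᵀ * Aᵀ)) * N1ᵀ := by rw [← hAt]
    _ = (N2 * A)ᵀ * ((N1 * A)ᵀ) := by
        simp only [Matrix.transpose_mul, Matrix.mul_assoc]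
    _ = (N2 * A) * (N1 * A) := by rw [h1d, h2d]
    _ = N2 * (A * N1 * A) := by simp only [Matrix.mul_assoc]
    _ = N2 * A := by rw [h1a]
  calc N1 = N1 * A * N1 := h1b.symm
  _ = N1 * (A * N2) := by rw [Matrix.mul_assoc, key1]
  _ = (N2 * A) * N2 := by rw [← Matrix.mul_assoc, key2]
  _ = N2 := h2b

lemma pinv_transpose {N : ℕ} {A Ad : Matrix (Fin N) (Fin N) ℝ}
    (hA : Aᵀ = A) (h : IsPseudoinverse A Ad) : IsPseudoinverse A Adᵀ := by
  obtain ⟨ha, hb, hc, hd⟩ := h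
  refine ⟨?_, ?_, ?_, ?_⟩
  · calc A * Adᵀ * A = (Aᵀ * Ad * Aᵀ)ᵀ := by
          simp only [Matrix.transpose_mul, Matrix.transpose_transpose, Matrix.mul_assoc]
    _ = A := by rw [hA, ha, hA]
  · calc Adᵀ * A * Adᵀ = (Ad * Aᵀ * Ad)ᵀ := by
          simp only [Matrix.transpose_mul, Matrix.transpose_transpose, Matrix.mul_assoc]
    _ = Adᵀ := by rw [hA, hb]
  · calc (A * Adᵀ)ᵀ = Ad * Aᵀ := by simp [Matrix.transpose_mul]
    _ = Ad * A := by rw [hA]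
    _ = (Ad * A)ᵀ := hd.symm
    _ = Aᵀ * Adᵀ := by simp [Matrix.transpose_mul]
    _ = A * Adᵀ := by rw [hA]
  · calc (Adᵀ * A)ᵀ = Aᵀ * Ad := by simp [Matrix.transpose_mul]
    _ = A * Ad := by rw [hA]
    _ = (A * Ad)ᵀ := hc.symm
    _ = Adᵀ * Aᵀ := by simp [Matrix.transpose_mul]
    _ = Adᵀ * A := by rw [hA]

lemma pinv_conj {N : ℕ} {A Ad P : Matrix (Fin N) (Fin N) ℝ}
    (hP : P * P = 1) (hPt : Pᵀ = P) (hPA : P * A * P = A)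
    (h : IsPseudoinverse A Ad) : IsPseudoinverse A (P * Ad * P) := by
  obtain ⟨ha, hb, hc, hd⟩ := h
  have hP' : ∀ X : Matrix (Fin N) (Fin N) ℝ, P * (P * X) = X := by
    intro X; rw [← Matrix.mul_assoc, hP, Matrix.one_mul]
  refine ⟨?_, ?_, ?_, ?_⟩
  · calc A * (P * Ad * P) * A
        = (P * A * P) * (P * Ad * P) * (P * A * P) := by rw [hPA]
    _ = P * (A * (P * P) * Ad * (P * P) * A) * P := by simp only [Matrix.mul_assoc]
    _ = P * (A * Ad * A) * P := by simp only [hP, hP', Matrix.mul_one, Matrix.one_mul,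
        Matrix.mul_assoc]
    _ = A := by rw [ha, hPA]
  · calc (P * Ad * P) * A * (P * Ad * P)
        = (P * Ad * P) * (P * A * P) * (P * Ad * P) := by rw [hPA]
    _ = P * (Ad * (P * P) * A * (P * P) * Ad) * P := by simp only [Matrix.mul_assoc]
    _ = P * (Ad * A * Ad) * P := by simp only [hP, hP', Matrix.mul_one, Matrix.one_mul,
        Matrix.mul_assoc]
    _ = P * Ad * P := by rw [hb, Matrix.mul_assoc]
  · calc (A * (P * Ad * P))ᵀ = ((P * A * P) * (P * Ad * P))ᵀ := by rw [hPA]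
    _ = (P * (A * Ad) * P)ᵀ := by simp only [Matrix.mul_assoc, hP, hP', Matrix.mul_one,
        Matrix.one_mul]
    _ = Pᵀ * (A * Ad)ᵀ * Pᵀ := by simp only [Matrix.transpose_mul, Matrix.mul_assoc]
    _ = P * (A * Ad) * P := by rw [hPt, hc]
    _ = (P * A * P) * (P * Ad * P) := by simp only [Matrix.mul_assoc, hP, hP', Matrix.mul_one,
        Matrix.one_mul]
    _ = A * (P * Ad * P) := by rw [hPA]
  · calc ((P * Ad * P) * A)ᵀ = ((P * Ad * P) * (P * A * P))ᵀ := by rw [hPA]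
    _ = (P * (Ad * A) * P)ᵀ := by simp only [Matrix.mul_assoc, hP, hP', Matrix.mul_one,
        Matrix.one_mul]
    _ = Pᵀ * (Ad * A)ᵀ * Pᵀ := by simp only [Matrix.transpose_mul, Matrix.mul_assoc]
    _ = P * (Ad * A) * P := by rw [hPt, hd]
    _ = (P * Ad * P) * (P * A * P) := by simp only [Matrix.mul_assoc, hP, hP', Matrix.mul_one,
        Matrix.one_mul]
    _ = (P * Ad * P) * A := by rw [hPA]

lemma exists_flip_involution {N : ℕ} (y ysub ρ : Fin N → ℝ) (κ : Fin N → ℕ)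
    (hysub : ∀ i, ysub i = 1 ∨ ysub i = -1)
    (hcard : ∀ (a r : ℝ) (c : ℕ),
      {i : Fin N | y i = a ∧ κ i = c ∧ ρ i = r ∧ ysub i = 1}.ncard
        = {i : Fin N | y i = a ∧ κ i = c ∧ ρ i = r ∧ ysub i = -1}.ncard) :
    ∃ π : Fin N → Fin N, Function.Involutive π ∧
      ∀ i, y (π i) = y i ∧ ysub (π i) = -ysub i ∧ κ (π i) = κ i ∧ ρ (π i) = ρ i := by
  classical
  set A : ℝ → ℕ → ℝ → ℝ → Finset (Fin N) := fun a c r b =>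
    Finset.univ.filter (fun j => y j = a ∧ κ j = c ∧ ρ j = r ∧ ysub j = b) with hA
  have hmemA : ∀ a c r b i, i ∈ A a c r b ↔ (y i = a ∧ κ i = c ∧ ρ i = r ∧ ysub i = b) := by
    intro a c r b i; simp [hA]
  have hAcard : ∀ (a : ℝ) (c : ℕ) (r : ℝ), (A a c r 1).card = (A a c r (-1)).card := by
    intro a c r
    have e1 : ∀ b : ℝ, {i : Fin N | y i = a ∧ κ i = c ∧ ρ i = r ∧ ysub i = b}.ncard
        = (A a c r b).card := by
      intro b
      rw [← Set.ncard_coe_finset]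
      congr 1
      ext i
      simp [hA]
    rw [← e1 1, ← e1 (-1)]
    exact hcard a r c
  have hAcard' : ∀ (a : ℝ) (c : ℕ) (r : ℝ),
      Fintype.card (A a c r 1) = Fintype.card (A a c r (-1)) := by
    intro a c r; simpa [Fintype.card_coe] using hAcard a c r
  set E : (a : ℝ) → (c : ℕ) → (r : ℝ) → (A a c r 1) ≃ (A a c r (-1)) :=
    fun a c r => Fintype.equivOfCardEq (hAcard' a c r) with hE
  set G : ℝ → ℕ → ℝ → Fin N → Fin N := fun a c r j =>
    if h : j ∈ A a c r 1 then (E a c r ⟨j, h⟩ : Fin N) else j with hG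
  set F : ℝ → ℕ → ℝ → Fin N → Fin N := fun a c r j =>
    if h : j ∈ A a c r (-1) then ((E a c r).symm ⟨j, h⟩ : Fin N) else j with hF
  set π : Fin N → Fin N := fun i =>
    if ysub i = 1 then G (y i) (κ i) (ρ i) i else F (y i) (κ i) (ρ i) i with hπ
  have hspec : ∀ i, y (π i) = y i ∧ ysub (π i) = -ysub i ∧ κ (π i) = κ i ∧ ρ (π i) = ρ i := by
    intro i
    by_cases h1 : ysub i = 1
    · have hi : i ∈ A (y i) (κ i) (ρ i) 1 := (hmemA _ _ _ _ i).2 ⟨rfl, rfl, rfl, h1⟩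
      have hπi : π i = (E (y i) (κ i) (ρ i) ⟨i, hi⟩ : Fin N) := by
        simp [hπ, hG, h1, hi]
      have hmem := (E (y i) (κ i) (ρ i) ⟨i, hi⟩).2
      rw [hmemA] at hmem
      rw [hπi]
      exact ⟨hmem.1, by rw [hmem.2.2.2, h1], hmem.2.1, hmem.2.2.1⟩
    · have h1' : ysub i = -1 := (hysub i).resolve_left h1
      have hi : i ∈ A (y i) (κ i) (ρ i) (-1) := (hmemA _ _ _ _ i).2 ⟨rfl, rfl, rfl, h1'⟩
      have hπi : π i = ((E (y i) (κ i) (ρ i)).symm ⟨i, hi⟩ : Fin N) := by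
        simp [hπ, hF, h1, hi]
      have hmem := ((E (y i) (κ i) (ρ i)).symm ⟨i, hi⟩).2
      rw [hmemA] at hmem
      rw [hπi]
      exact ⟨hmem.1, by rw [hmem.2.2.2, h1']; norm_num, hmem.2.1, hmem.2.2.1⟩
  refine ⟨π, ?_, hspec⟩
  intro i
  obtain ⟨hY, hS, hκ2, hρ2⟩ := hspec i
  by_cases h1 : ysub i = 1
  · have hi : i ∈ A (y i) (κ i) (ρ i) 1 := (hmemA _ _ _ _ i).2 ⟨rfl, rfl, rfl, h1⟩
    have hπi : π i = (E (y i) (κ i) (ρ i) ⟨i, hi⟩ : Fin N) := by simp [hπ, hG, h1, hi]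
    have hsub : ysub (π i) = -1 := by rw [hS, h1]
    have h2 : ¬ (ysub (π i) = 1) := by rw [hsub]; norm_num
    have hj : π i ∈ A (y i) (κ i) (ρ i) (-1) := by
      rw [hπi]; exact (E (y i) (κ i) (ρ i) ⟨i, hi⟩).2
    have : π (π i) = F (y (π i)) (κ (π i)) (ρ (π i)) (π i) := by exact if_neg h2
    rw [this, hY, hκ2, hρ2, hF]
    simp only [hj, dif_pos]
    have : (⟨π i, hj⟩ : (A (y i) (κ i) (ρ i) (-1))) = E (y i) (κ i) (ρ i) ⟨i, hi⟩ :=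
      Subtype.ext hπi
    rw [this, Equiv.symm_apply_apply]
  · have h1' : ysub i = -1 := (hysub i).resolve_left h1
    have hi : i ∈ A (y i) (κ i) (ρ i) (-1) := (hmemA _ _ _ _ i).2 ⟨rfl, rfl, rfl, h1'⟩
    have hπi : π i = ((E (y i) (κ i) (ρ i)).symm ⟨i, hi⟩ : Fin N) := by simp [hπ, hF, h1, hi]
    have hsub : ysub (π i) = 1 := by rw [hS, h1']; norm_num
    have hj : π i ∈ A (y i) (κ i) (ρ i) 1 := by
      rw [hπi]; exact ((E (y i) (κ i) (ρ i)).symm ⟨i, hi⟩).2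
    have : π (π i) = G (y (π i)) (κ (π i)) (ρ (π i)) (π i) := by exact if_pos hsub
    rw [this, hY, hκ2, hρ2, hG]
    simp only [hj, dif_pos]
    have : (⟨π i, hj⟩ : (A (y i) (κ i) (ρ i) 1)) = (E (y i) (κ i) (ρ i)).symm ⟨i, hi⟩ :=
      Subtype.ext hπi
    rw [this, Equiv.apply_symm_apply]

theorem stmt_12
    (m K n D : ℕ)
    (hm : 1 ≤ m) (hK : 3 ≤ K) (hn : 1 ≤ n) (hdiv : 8 * (K - 2) ∣ n)
    (hD : K + 1 + m * n ≤ D)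
    (φ : ℕ → ℝ) (hφ : ∀ j, 1 ≤ j → j ≤ K → 0 < φ j)
    (μ σξ : ℝ) (hσ : 0 < σξ)
    (v : ℕ → Fin D → ℝ)
    (hortho : ∀ i j, i ≤ K + m * n → j ≤ K + m * n →
      (∑ t, v i t * v j t) = if i = j then (1 : ℝ) else 0)
    (y ysub ρ : Fin (m * n) → ℝ) (κ : Fin (m * n) → ℕ)
    (hy : ∀ i, y i = 1 ∨ y i = -1)
    (hysub : ∀ i, ysub i = 1 ∨ ysub i = -1)
    (hρ : ∀ i, ρ i = 1 ∨ ρ i = -1)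
    (hκ : ∀ i, 3 ≤ κ i ∧ κ i ≤ K)
    (hblock : ∀ i j : Fin (m * n), i.1 / m = j.1 / m →
      y i = y j ∧ ysub i = ysub j ∧ κ i = κ j ∧ ρ i = ρ j)
    (hbal : ∀ (a b r : ℝ) (c : ℕ), (a = 1 ∨ a = -1) → (b = 1 ∨ b = -1) →
      (r = 1 ∨ r = -1) → 3 ≤ c → c ≤ K →
      Set.ncard {i : Fin (m * n) | y i = a ∧ ysub i = b ∧ κ i = c ∧ ρ i = r}
        = m * n / (8 * (K - 2)))
    (x : Fin (m * n) → Fin D → ℝ)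
    (hx : ∀ i, x i = fun t => v 0 t + y i * φ 1 * v 1 t + (ysub i * φ 2 + μ) * v 2 t
      + ρ i * φ (κ i) * v (κ i) t + σξ * v (K + 1 + i.1) t)
    (M Mp : Matrix (Fin D) (Fin D) ℝ)
    (hM : M = ((m * n : ℝ))⁻¹ • ∑ i, Matrix.vecMulVec (x i) (x i))
    (xbar : ℝ → Fin D → ℝ)
    (hxbar : ∀ ε, xbar ε = (2 / (m * n : ℝ)) •
      ∑ i, Set.indicator {j : Fin (m * n) | y j = ε} x i)
    (hMp : Mp = (2 : ℝ)⁻¹ • (Matrix.vecMulVec (xbar 1) (xbar 1)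
      + Matrix.vecMulVec (xbar (-1)) (xbar (-1))))
    (hμ : μ = 0)
    (Md : Matrix (Fin D) (Fin D) ℝ) (hMd : IsPseudoinverse M Md) :
    (v 2) ⬝ᵥ (Md * Mp * Md).mulVec (v 2) = 0 ∧
    ∀ (q : ℕ) (W : Matrix (Fin q) (Fin D) ℝ),
      Wᵀ * W = Md * Mp * Md → W.mulVec (v 2) = 0 := by
  subst hμ
  simp only [add_zero] at hx
  have hvv : ∀ i j, i ≤ K + m * n → j ≤ K + m * n →
      v i ⬝ᵥ v j = if i = j then (1 : ℝ) else 0 := by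
    intro i j hi hj
    simpa [dotProduct] using hortho i j hi hj
  have hNi : ∀ i : Fin (m * n), K + 1 + (i : ℕ) ≤ K + m * n := fun i => by
    have := i.isLt; omega
  have hκK : ∀ i : Fin (m * n), κ i ≤ K + m * n := fun i => le_trans (hκ i).2 (by omega)
  have huu : ∀ i j : Fin (m * n),
      v (K + 1 + (i : ℕ)) ⬝ᵥ v (K + 1 + (j : ℕ)) = if i = j then (1 : ℝ) else 0 := by
    intro i j
    rw [hvv _ _ (hNi i) (hNi j)]
    by_cases h : i = j
    · simp [h]
    · have h2 : ¬(K + 1 + (i : ℕ) = K + 1 + (j : ℕ)) := fun hc => h (Fin.ext (by omega))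
      simp [h, h2]; exact fun hc => h (Fin.ext hc)
  have hv2u : ∀ j : Fin (m * n), v 2 ⬝ᵥ v (K + 1 + (j : ℕ)) = 0 := by
    intro j
    rw [hvv 2 _ (by omega) (hNi j)]
    have : ¬((2 : ℕ) = K + 1 + (j : ℕ)) := by omega
    simp [this]
  have huv2 : ∀ j : Fin (m * n), v (K + 1 + (j : ℕ)) ⬝ᵥ v 2 = 0 := fun j => by
    rw [dotProduct_comm]; exact hv2u j
  have hv2v2 : v 2 ⬝ᵥ v 2 = 1 := by rw [hvv 2 2 (by omega) (by omega)]; simp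
  have hdotx : ∀ (w : Fin D → ℝ) (i : Fin (m * n)), w ⬝ᵥ x i =
      w ⬝ᵥ v 0 + (y i * φ 1) * (w ⬝ᵥ v 1) + (ysub i * φ 2) * (w ⬝ᵥ v 2)
        + (ρ i * φ (κ i)) * (w ⬝ᵥ v (κ i)) + σξ * (w ⬝ᵥ v (K + 1 + (i : ℕ))) := by
    intro w i
    rw [hx i]
    simp only [dotProduct, mul_add, Finset.sum_add_distrib]
    rw [sum_mul_const_mul, sum_mul_const_mul, sum_mul_const_mul, sum_mul_const_mul]
  have hv2x : ∀ i, v 2 ⬝ᵥ x i = ysub i * φ 2 := by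
    intro i
    rw [hdotx, hv2u i, hvv 2 0 (by omega) (by omega), hvv 2 1 (by omega) (by omega), hv2v2,
      hvv 2 (κ i) (by omega) (hκK i)]
    have h2κ : ¬((2 : ℕ) = κ i) := by have := (hκ i).1; omega
    simp [h2κ]
  have hux : ∀ j i : Fin (m * n),
      v (K + 1 + (j : ℕ)) ⬝ᵥ x i = if j = i then σξ else 0 := by
    intro j i
    rw [hdotx, huu j i, hvv _ 0 (hNi j) (by omega), hvv _ 1 (hNi j) (by omega),
      hvv _ 2 (hNi j) (by omega), hvv _ (κ i) (hNi j) (hκK i)]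
    have e0 : ¬(K + 1 + (j : ℕ) = 0) := by omega
    have e1 : ¬(K + 1 + (j : ℕ) = 1) := by omega
    have e2 : ¬(K + 1 + (j : ℕ) = 2) := by omega
    have e3 : ¬(K + 1 + (j : ℕ) = κ i) := by have := (hκ i).2; omega
    simp only [e0, e1, e2, e3, if_false, mul_zero, zero_add, add_zero, mul_ite, mul_one]
  have hcard : ∀ (a r : ℝ) (c : ℕ),
      {i : Fin (m * n) | y i = a ∧ κ i = c ∧ ρ i = r ∧ ysub i = 1}.ncard
        = {i : Fin (m * n) | y i = a ∧ κ i = c ∧ ρ i = r ∧ ysub i = -1}.ncard := by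
    intro a r c
    by_cases ha : a = 1 ∨ a = -1
    · by_cases hr : r = 1 ∨ r = -1
      · by_cases hc3 : 3 ≤ c ∧ c ≤ K
        · have e1 : ∀ b : ℝ, {i : Fin (m * n) | y i = a ∧ κ i = c ∧ ρ i = r ∧ ysub i = b}
              = {i : Fin (m * n) | y i = a ∧ ysub i = b ∧ κ i = c ∧ ρ i = r} := by
            intro b; ext i; simp only [Set.mem_setOf_eq]; tauto
          rw [e1, e1, hbal a 1 r c ha (Or.inl rfl) hr hc3.1 hc3.2,
            hbal a (-1) r c ha (Or.inr rfl) hr hc3.1 hc3.2]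
        · have e : ∀ b : ℝ, {i : Fin (m * n) | y i = a ∧ κ i = c ∧ ρ i = r ∧ ysub i = b}
              = ∅ := by
            intro b; ext i
            simp only [Set.mem_setOf_eq, Set.mem_empty_iff_false, iff_false]
            rintro ⟨-, h2, -, -⟩
            exact hc3 ⟨by rw [← h2]; exact (hκ i).1, by rw [← h2]; exact (hκ i).2⟩
          rw [e 1, e (-1)]
      · have e : ∀ b : ℝ, {i : Fin (m * n) | y i = a ∧ κ i = c ∧ ρ i = r ∧ ysub i = b}
            = ∅ := by
          intro b; ext i
          simp only [Set.mem_setOf_eq, Set.mem_empty_iff_false, iff_false]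
          rintro ⟨-, -, h3, -⟩
          exact hr (h3 ▸ hρ i)
        rw [e 1, e (-1)]
    · have e : ∀ b : ℝ, {i : Fin (m * n) | y i = a ∧ κ i = c ∧ ρ i = r ∧ ysub i = b}
          = ∅ := by
        intro b; ext i
        simp only [Set.mem_setOf_eq, Set.mem_empty_iff_false, iff_false]
        rintro ⟨h1, -, -, -⟩
        exact ha (h1 ▸ hy i)
      rw [e 1, e (-1)]
  obtain ⟨π, hπinv, hπspec⟩ := exists_flip_involution y ysub ρ κ hysub hcard
  have hπe : ∀ (F : Fin (m * n) → Matrix (Fin D) (Fin D) ℝ),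
      ∑ j, F (π j) = ∑ j, F j :=
    fun F => Fintype.sum_equiv ⟨π, π, hπinv, hπinv⟩ _ _ (fun j => rfl)
  have hπev : ∀ (F : Fin (m * n) → (Fin D → ℝ)),
      ∑ j, F (π j) = ∑ j, F j :=
    fun F => Fintype.sum_equiv ⟨π, π, hπinv, hπinv⟩ _ _ (fun j => rfl)
  set V : Matrix (Fin D) (Fin D) ℝ := vecMulVec (v 2) (v 2) with hV
  set S : Matrix (Fin D) (Fin D) ℝ :=
    ∑ j : Fin (m * n), vecMulVec (v (K + 1 + (j : ℕ))) (v (K + 1 + (j : ℕ))) with hS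
  set T : Matrix (Fin D) (Fin D) ℝ :=
    ∑ j : Fin (m * n), vecMulVec (v (K + 1 + ((π j) : ℕ))) (v (K + 1 + (j : ℕ))) with hT
  set P : Matrix (Fin D) (Fin D) ℝ := 1 - (2 : ℝ) • V - S + T with hP
  have hVV : V * V = V := by rw [hV, _root_.vecMulVec_mul_vecMulVec, hv2v2, one_smul]
  have hVS : V * S = 0 := by
    rw [hV, hS, Finset.mul_sum]
    simp [_root_.vecMulVec_mul_vecMulVec, hv2u]
  have hSV : S * V = 0 := by
    rw [hS, hV, Finset.sum_mul]
    simp [_root_.vecMulVec_mul_vecMulVec, huv2]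
  have hVT : V * T = 0 := by
    rw [hV, hT, Finset.mul_sum]
    simp [_root_.vecMulVec_mul_vecMulVec, hv2u]
  have hTV : T * V = 0 := by
    rw [hT, hV, Finset.sum_mul]
    simp [_root_.vecMulVec_mul_vecMulVec, huv2]
  have hSS : S * S = S := by
    rw [hS, Finset.sum_mul]
    refine Finset.sum_congr rfl fun i _ => ?_
    rw [Finset.mul_sum]
    simp [_root_.vecMulVec_mul_vecMulVec, huu, ite_smul, Finset.sum_ite_eq]
  have hST : S * T = T := by
    rw [hS, hT, Finset.sum_mul]
    simp only [Finset.mul_sum, _root_.vecMulVec_mul_vecMulVec, huu, ite_smul, one_smul, zero_smul]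
    rw [Finset.sum_comm]
    simp [Finset.sum_ite_eq]
  have hTS : T * S = T := by
    rw [hT, hS, Finset.sum_mul]
    simp only [Finset.mul_sum, _root_.vecMulVec_mul_vecMulVec, huu, ite_smul, one_smul, zero_smul]
    simp [Finset.sum_ite_eq]
  have hTT : T * T = S := by
    rw [hT]
    simp only [Finset.sum_mul, Finset.mul_sum, _root_.vecMulVec_mul_vecMulVec, huu, ite_smul,
      one_smul, zero_smul]
    simp only [Finset.sum_ite_eq', Finset.mem_univ, if_true]
    rw [hS]
    exact Finset.sum_congr rfl fun a _ => by rw [hπinv a]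
  have hVt : Vᵀ = V := by rw [hV, vecMulVec_transpose']
  have hSt : Sᵀ = S := by rw [hS, Matrix.transpose_sum]; simp [vecMulVec_transpose']
  have hTt : Tᵀ = T := by
    rw [hT, Matrix.transpose_sum]
    simp only [vecMulVec_transpose']
    rw [← hπe (fun j => vecMulVec (v (K + 1 + (j : ℕ))) (v (K + 1 + ((π j) : ℕ))))]
    exact Finset.sum_congr rfl fun j _ => by rw [hπinv j]
  have hPt : Pᵀ = P := by
    rw [hP]
    simp only [Matrix.transpose_add, Matrix.transpose_sub, Matrix.transpose_smul,
      Matrix.transpose_one, hVt, hSt, hTt]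
  have hPP : P * P = 1 := by
    rw [hP]
    simp only [Matrix.mul_sub, Matrix.sub_mul, Matrix.mul_add, Matrix.add_mul,
      Matrix.mul_one, Matrix.one_mul, Matrix.smul_mul, Matrix.mul_smul,
      hVV, hVS, hSV, hVT, hTV, hSS, hST, hTS, hTT, smul_zero]
    module
  have hPx : ∀ i : Fin (m * n), P *ᵥ x i = x (π i) := by
    intro i
    have hVx : V *ᵥ x i = (ysub i * φ 2) • v 2 := by rw [hV, mulVec_vecMulVec, hv2x i]
    have hSx : S *ᵥ x i = σξ • v (K + 1 + (i : ℕ)) := by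
      rw [hS, sum_mulVec']
      simp [mulVec_vecMulVec, hux, ite_smul]
    have hTx : T *ᵥ x i = σξ • v (K + 1 + ((π i) : ℕ)) := by
      rw [hT, sum_mulVec']
      simp [mulVec_vecMulVec, hux, ite_smul]
    rw [hP, Matrix.add_mulVec, Matrix.sub_mulVec, Matrix.sub_mulVec, Matrix.one_mulVec,
      Matrix.smul_mulVec, hVx, hSx, hTx]
    obtain ⟨hy1, hs1, hk1, hr1⟩ := hπspec i
    funext t
    simp only [Pi.add_apply, Pi.sub_apply, Pi.smul_apply, smul_eq_mul, hx, hy1, hs1, hk1, hr1]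
    ring
  have hPv2 : P *ᵥ v 2 = -(v 2) := by
    have hVv : V *ᵥ v 2 = v 2 := by rw [hV, mulVec_vecMulVec, hv2v2, one_smul]
    have hSv : S *ᵥ v 2 = 0 := by rw [hS, sum_mulVec']; simp [mulVec_vecMulVec, huv2]
    have hTv : T *ᵥ v 2 = 0 := by rw [hT, sum_mulVec']; simp [mulVec_vecMulVec, huv2]
    rw [hP, Matrix.add_mulVec, Matrix.sub_mulVec, Matrix.sub_mulVec, Matrix.one_mulVec,
      Matrix.smul_mulVec, hVv, hSv, hTv]
    funext t
    simp only [Pi.add_apply, Pi.sub_apply, Pi.smul_apply, Pi.neg_apply, Pi.zero_apply,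
      smul_eq_mul]
    ring
  have hPM : P * M * P = M := by
    rw [hM]
    calc P * (((m : ℝ) * n)⁻¹ • ∑ i, vecMulVec (x i) (x i)) * P
        = ((m : ℝ) * n)⁻¹ • ∑ i, (P * vecMulVec (x i) (x i) * P) := by
          simp only [Matrix.smul_mul, Matrix.mul_smul, Finset.mul_sum, Finset.sum_mul]
    _ = ((m : ℝ) * n)⁻¹ • ∑ i, vecMulVec (x (π i)) (x (π i)) := by
          exact congrArg _ (Finset.sum_congr rfl fun i _ => by
            rw [_root_.mul_vecMulVec, _root_.vecMulVec_mul, hPt, hPx i])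
    _ = ((m : ℝ) * n)⁻¹ • ∑ i, vecMulVec (x i) (x i) := by
          rw [hπe (fun i => vecMulVec (x i) (x i))]
  have hPxbar : ∀ ε : ℝ, P *ᵥ xbar ε = xbar ε := by
    intro ε
    rw [hxbar ε, Matrix.mulVec_smul, mulVec_sum']
    congr 1
    calc (∑ i, P *ᵥ (Set.indicator {j : Fin (m * n) | y j = ε} x i))
        = ∑ i, Set.indicator {j : Fin (m * n) | y j = ε} (fun j => x (π j)) i := by
          refine Finset.sum_congr rfl fun i _ => ?_
          by_cases h : i ∈ {j : Fin (m * n) | y j = ε}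
          · rw [Set.indicator_of_mem h, Set.indicator_of_mem h, hPx i]
          · rw [Set.indicator_of_notMem h, Set.indicator_of_notMem h, Matrix.mulVec_zero]
    _ = ∑ i, Set.indicator {j : Fin (m * n) | y j = ε} x i := by
          rw [← hπev (fun i => Set.indicator {j : Fin (m * n) | y j = ε} x i)]
          refine Finset.sum_congr rfl fun i _ => ?_
          by_cases h : i ∈ {j : Fin (m * n) | y j = ε}
          · have h' : π i ∈ {j : Fin (m * n) | y j = ε} := by
              simp only [Set.mem_setOf_eq] at h ⊢
              rw [(hπspec i).1, h]
            rw [Set.indicator_of_mem h, Set.indicator_of_mem h']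
          · have h' : π i ∉ {j : Fin (m * n) | y j = ε} := by
              simp only [Set.mem_setOf_eq] at h ⊢
              rw [(hπspec i).1]; exact h
            rw [Set.indicator_of_notMem h, Set.indicator_of_notMem h']
  have hMt : Mᵀ = M := by
    rw [hM, Matrix.transpose_smul, Matrix.transpose_sum]
    simp [vecMulVec_transpose']
  have hMdt : Mdᵀ = Md := pinv_unique (pinv_transpose hMt hMd) hMd
  have hPMdP : P * Md * P = Md := pinv_unique (pinv_conj hPP hPt hPM hMd) hMd
  have hcomm : Md * P = P * Md := by
    calc Md * P = 1 * Md * P := by rw [Matrix.one_mul]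
    _ = (P * P) * Md * P := by rw [hPP]
    _ = P * (P * Md * P) := by simp only [Matrix.mul_assoc]
    _ = P * Md := by rw [hPMdP]
  have hs : ∀ ε : ℝ, v 2 ⬝ᵥ (Md *ᵥ xbar ε) = 0 := by
    intro ε
    have h1 : Md *ᵥ xbar ε = P *ᵥ (Md *ᵥ xbar ε) := by
      conv_lhs => rw [← hPxbar ε]
      rw [Matrix.mulVec_mulVec, hcomm, ← Matrix.mulVec_mulVec]
    have h2 : v 2 ⬝ᵥ (P *ᵥ (Md *ᵥ xbar ε)) = -(v 2 ⬝ᵥ (Md *ᵥ xbar ε)) := by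
      rw [Matrix.dotProduct_mulVec]
      have hv2P : v 2 ᵥ* P = -(v 2) := by
        rw [← Matrix.mulVec_transpose, hPt, hPv2]
      rw [hv2P, neg_dotProduct]
    have h3 := h2
    rw [← h1] at h3
    linarith
  have hs' : ∀ ε : ℝ, (Md *ᵥ xbar ε) ⬝ᵥ v 2 = 0 := fun ε => by
    rw [dotProduct_comm]; exact hs ε
  have hkey : Md * Mp * Md = (2 : ℝ)⁻¹ • (vecMulVec (Md *ᵥ xbar 1) (Md *ᵥ xbar 1)
      + vecMulVec (Md *ᵥ xbar (-1)) (Md *ᵥ xbar (-1))) := by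
    rw [hMp]
    calc Md * ((2 : ℝ)⁻¹ • (vecMulVec (xbar 1) (xbar 1)
          + vecMulVec (xbar (-1)) (xbar (-1)))) * Md
        = (2 : ℝ)⁻¹ • (Md * vecMulVec (xbar 1) (xbar 1) * Md
            + Md * vecMulVec (xbar (-1)) (xbar (-1)) * Md) := by
          simp only [Matrix.mul_smul, Matrix.smul_mul, Matrix.mul_add, Matrix.add_mul]
    _ = _ := by
          rw [_root_.mul_vecMulVec, _root_.vecMulVec_mul, hMdt, _root_.mul_vecMulVec, _root_.vecMulVec_mul, hMdt]
  have part1 : (v 2) ⬝ᵥ (Md * Mp * Md).mulVec (v 2) = 0 := by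
    rw [hkey, Matrix.smul_mulVec, Matrix.add_mulVec, mulVec_vecMulVec, mulVec_vecMulVec]
    rw [dotProduct_smul, dotProduct_add, dotProduct_smul,
      dotProduct_smul, hs 1, hs (-1)]
    simp
  refine ⟨part1, ?_⟩
  intro q W hW
  have e : v 2 ⬝ᵥ ((Wᵀ * W) *ᵥ v 2) = (W *ᵥ v 2) ⬝ᵥ (W *ᵥ v 2) := by
    rw [← Matrix.mulVec_mulVec, Matrix.dotProduct_mulVec, Matrix.vecMul_transpose]
  have h0 : (W *ᵥ v 2) ⬝ᵥ (W *ᵥ v 2) = 0 := by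
    rw [← e, hW]
    exact part1
  have h0' : ∑ t, (W *ᵥ v 2) t * (W *ᵥ v 2) t = 0 := h0
  have hz := (Finset.sum_eq_zero_iff_of_nonneg
    (fun t _ => mul_self_nonneg ((W *ᵥ v 2) t))).1 h0'
  funext t
  exact mul_self_eq_zero.1 (hz t (Finset.mem_univ t))
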